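/- Let U be an n-qubit unitary, T ⊆ [n] with |T| = k, τ > 0, and S ⊇ {i ∈ T : Inf_i^{≤k}[U] ≥ τ²/k}. Let V be any junta unitary on T, and define V' = Tr_{S̄}(V)/2^{|S̄|} ⊗ I_{S̄}. Then (1/2ⁿ)·| |Tr(U†V)| − |Tr(U†V')| | ≤ τ. -/

import Mathlib

open scoped Matrix

open Finset

/-- The four single-qubit Pauli matrices `I, X, Y, Z`. -/
noncomputable def pauli (x : Fin 4) : Matrix (Fin 2) (Fin 2) ℂ :=
  if x = 0 then 1
  else if x = 1 then !![0, 1; 1, 0]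
  else if x = 2 then !![0, -Complex.I; Complex.I, 0]
  else !![1, 0; 0, -1]

/-- The `n`-qubit Pauli string `σ_x = σ_{x₁} ⊗ ⋯ ⊗ σ_{xₙ}`. -/
noncomputable def pauliString {n : ℕ} (x : Fin n → Fin 4) :
    Matrix (Fin n → Fin 2) (Fin n → Fin 2) ℂ :=
  Matrix.of fun a b => ∏ i, pauli (x i) (a i) (b i)

/-- The Pauli (Fourier) coefficient `Û(x) = 2⁻ⁿ Tr(σ_x† U)`. -/
noncomputable def pauliCoeff {n : ℕ} (U : Matrix (Fin n → Fin 2) (Fin n → Fin 2) ℂ)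
    (x : Fin n → Fin 4) : ℂ :=
  (1 / 2 ^ n) * Matrix.trace ((pauliString x)ᴴ * U)

/-- The support of a Pauli string. -/
def psupp {n : ℕ} (x : Fin n → Fin 4) : Finset (Fin n) :=
  Finset.univ.filter fun i => x i ≠ 0

/-- Influence of a set of qubits: `Inf_A[U] = ∑_{supp(x) ∩ A ≠ ∅} |Û(x)|²`. -/
noncomputable def infSet {n : ℕ} (U : Matrix (Fin n → Fin 2) (Fin n → Fin 2) ℂ)
    (A : Finset (Fin n)) : ℝ :=
  ∑ x ∈ Finset.univ.filter (fun x : Fin n → Fin 4 => (psupp x ∩ A).Nonempty),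
    ‖pauliCoeff U x‖ ^ 2

/-- Degree-`k` influence of qubit `i`:
`Inf_i^{≤k}[U] = ∑_{|supp(x)| ≤ k, x_i ≠ 0} |Û(x)|²`. -/
noncomputable def infLe {n : ℕ} (U : Matrix (Fin n → Fin 2) (Fin n → Fin 2) ℂ)
    (k : ℕ) (i : Fin n) : ℝ :=
  ∑ x ∈ Finset.univ.filter (fun x : Fin n → Fin 4 => (psupp x).card ≤ k ∧ x i ≠ 0),
    ‖pauliCoeff U x‖ ^ 2

/-- A matrix is a junta on the qubit set T if all its Pauli coefficients
outside T vanish, i.e. it acts nontrivially only on T. -/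
def IsJuntaOn {n : ℕ} (V : Matrix (Fin n → Fin 2) (Fin n → Fin 2) ℂ)
    (T : Finset (Fin n)) : Prop :=
  ∀ x : Fin n → Fin 4, ¬ psupp x ⊆ T → pauliCoeff V x = 0

/-- The matrix Tr_{S complement}(V)/2^{n-|S|} tensored with the identity
outside S, written as a matrix on the full n-qubit space. -/
noncomputable def avgOut {n : ℕ} (S : Finset (Fin n))
    (V : Matrix (Fin n → Fin 2) (Fin n → Fin 2) ℂ) :
    Matrix (Fin n → Fin 2) (Fin n → Fin 2) ℂ :=
  Matrix.of fun a b =>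
    if ∀ i, i ∉ S → a i = b i then
      (1 / 2 ^ n : ℂ) * ∑ c : Fin n → Fin 2,
        V (fun i => if i ∈ S then a i else c i) (fun i => if i ∈ S then b i else c i)
    else 0

lemma pauli0 : pauli 0 = 1 := rfl
lemma pauli1 : pauli 1 = !![0, 1; 1, 0] := rfl
lemma pauli2 : pauli 2 = !![0, -Complex.I; Complex.I, 0] := rfl
lemma pauli3 : pauli 3 = !![1, 0; 0, -1] := rfl

lemma pauli_orth (x y : Fin 4) :
    ∑ a : Fin 2, ∑ b : Fin 2, (starRingEnd ℂ) (pauli x a b) * pauli y a b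
      = if x = y then 2 else 0 := by
  fin_cases x <;> fin_cases y <;>
    simp [pauli0, pauli1, pauli2, pauli3, Fin.sum_univ_two, Matrix.one_apply,
      Complex.ext_iff] <;> norm_num

lemma pauli_trace (x : Fin 4) :
    ∑ a : Fin 2, pauli x a a = if x = 0 then 2 else 0 := by
  fin_cases x <;>
    simp [pauli0, pauli1, pauli2, pauli3, Fin.sum_univ_two, Matrix.one_apply]

lemma pauli_compl (a b a' b' : Fin 2) :
    ∑ x : Fin 4, pauli x a b * (starRingEnd ℂ) (pauli x a' b')
      = if a = a' ∧ b = b' then 2 else 0 := by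
  fin_cases a <;> fin_cases b <;> fin_cases a' <;> fin_cases b' <;>
    simp [pauli0, pauli1, pauli2, pauli3, Fin.sum_univ_four, Matrix.one_apply,
      Complex.ext_iff] <;> norm_num

lemma trace_form {n : ℕ} (A B : Matrix (Fin n → Fin 2) (Fin n → Fin 2) ℂ) :
    Matrix.trace (Aᴴ * B) = ∑ j, ∑ i, (starRingEnd ℂ) (A i j) * B i j := by
  simp [Matrix.trace, Matrix.mul_apply, Matrix.conjTranspose_apply, Matrix.diag]

/-- completeness: `∑ x, σ_x(i,j) conj σ_x(i',j') = 2^n δ δ` -/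
lemma pauliString_compl {n : ℕ} (i j i' j' : Fin n → Fin 2) :
    ∑ x : Fin n → Fin 4, pauliString x i j * (starRingEnd ℂ) (pauliString x i' j')
      = if i = i' ∧ j = j' then (2 : ℂ) ^ n else 0 := by
  have h1 : ∀ x : Fin n → Fin 4,
      pauliString x i j * (starRingEnd ℂ) (pauliString x i' j')
        = ∏ l, (pauli (x l) (i l) (j l) * (starRingEnd ℂ) (pauli (x l) (i' l) (j' l))) := by
    intro x
    simp [pauliString, map_prod, Finset.prod_mul_distrib]
  simp_rw [h1]
  rw [← Fintype.prod_sum (f := fun l v => pauli v (i l) (j l) * (starRingEnd ℂ) (pauli v (i' l) (j' l)))]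
  simp_rw [pauli_compl]
  by_cases h : i = i' ∧ j = j'
  · obtain ⟨h1', h2'⟩ := h
    subst h1'; subst h2'
    simp
  · rw [if_neg h]
    have : ∃ l, ¬ (i l = i' l ∧ j l = j' l) := by
      by_contra hc
      push_neg at hc
      exact h ⟨funext fun l => (hc l).1, funext fun l => (hc l).2⟩
    obtain ⟨l, hl⟩ := this
    exact Finset.prod_eq_zero (mem_univ l) (if_neg hl)

/-- orthogonality of Pauli strings -/
lemma pauliString_orth {n : ℕ} (x y : Fin n → Fin 4) :
    Matrix.trace ((pauliString x)ᴴ * pauliString y) = if x = y then (2 : ℂ) ^ n else 0 := by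
  rw [trace_form]
  have h1 : ∀ j i : Fin n → Fin 2,
      (starRingEnd ℂ) (pauliString x i j) * pauliString y i j
        = ∏ l, ((starRingEnd ℂ) (pauli (x l) (i l) (j l)) * pauli (y l) (i l) (j l)) := by
    intro j i
    simp [pauliString, map_prod, Finset.prod_mul_distrib]
  simp_rw [h1]
  have h2 : ∀ j : Fin n → Fin 2,
      ∑ i : Fin n → Fin 2, ∏ l, ((starRingEnd ℂ) (pauli (x l) (i l) (j l)) * pauli (y l) (i l) (j l))
        = ∏ l, ∑ u : Fin 2, ((starRingEnd ℂ) (pauli (x l) u (j l)) * pauli (y l) u (j l)) := by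
    intro j
    exact (Fintype.prod_sum (f := fun l u => (starRingEnd ℂ) (pauli (x l) u (j l)) * pauli (y l) u (j l))).symm
  simp_rw [h2]
  rw [← Fintype.prod_sum (f := fun l v => ∑ u : Fin 2, ((starRingEnd ℂ) (pauli (x l) u v) * pauli (y l) u v))]
  have h3 : ∀ l, ∑ v : Fin 2, ∑ u : Fin 2, (starRingEnd ℂ) (pauli (x l) u v) * pauli (y l) u v
      = if x l = y l then 2 else 0 := by
    intro l
    rw [Finset.sum_comm]
    exact pauli_orth (x l) (y l)
  simp_rw [h3]
  by_cases h : x = y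
  · subst h; simp
  · rw [if_neg h]
    obtain ⟨l, hl⟩ := Function.ne_iff.mp h
    exact Finset.prod_eq_zero (mem_univ l) (if_neg hl)

lemma sum_pair {α β : Type*} [Fintype α] [Fintype β] (g : α → β → ℂ) :
    ∑ j, ∑ i, g j i = ∑ p : α × β, g p.1 p.2 := by
  rw [← Finset.sum_product']
  rw [Finset.univ_product_univ]

lemma inner_formula {n : ℕ} (U W : Matrix (Fin n → Fin 2) (Fin n → Fin 2) ℂ) :
    Matrix.trace (Uᴴ * W)
      = (2 : ℂ) ^ n * ∑ x : Fin n → Fin 4, (starRingEnd ℂ) (pauliCoeff U x) * pauliCoeff W x := by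
  have hW : ∀ x, pauliCoeff W x
      = (1 / 2 ^ n : ℂ) * ∑ q : (Fin n → Fin 2) × (Fin n → Fin 2),
          (starRingEnd ℂ) (pauliString x q.2 q.1) * W q.2 q.1 := by
    intro x
    rw [pauliCoeff, trace_form, sum_pair (g := fun j i => (starRingEnd ℂ) (pauliString x i j) * W i j)]
  have hU : ∀ x, (starRingEnd ℂ) (pauliCoeff U x)
      = (1 / 2 ^ n : ℂ) * ∑ p : (Fin n → Fin 2) × (Fin n → Fin 2),
          pauliString x p.2 p.1 * (starRingEnd ℂ) (U p.2 p.1) := by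
    intro x
    rw [pauliCoeff, trace_form, sum_pair (g := fun j i => (starRingEnd ℂ) (pauliString x i j) * U i j)]
    rw [map_mul, map_sum]
    simp [map_sum, map_mul, Complex.conj_ofNat]
  simp_rw [hU, hW]
  have step : ∀ x : Fin n → Fin 4,
      ((1 / 2 ^ n : ℂ) * ∑ p : (Fin n → Fin 2) × (Fin n → Fin 2),
          pauliString x p.2 p.1 * (starRingEnd ℂ) (U p.2 p.1))
        * ((1 / 2 ^ n : ℂ) * ∑ q : (Fin n → Fin 2) × (Fin n → Fin 2),
          (starRingEnd ℂ) (pauliString x q.2 q.1) * W q.2 q.1)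
      = (1 / 4 ^ n : ℂ) * ∑ p : (Fin n → Fin 2) × (Fin n → Fin 2),
          ∑ q : (Fin n → Fin 2) × (Fin n → Fin 2),
            (pauliString x p.2 p.1 * (starRingEnd ℂ) (pauliString x q.2 q.1))
              * ((starRingEnd ℂ) (U p.2 p.1) * W q.2 q.1) := by
    intro x
    rw [mul_mul_mul_comm]
    have h4 : (1 / 2 ^ n : ℂ) * (1 / 2 ^ n) = 1 / 4 ^ n := by
      rw [div_mul_div_comm, ← mul_pow]; norm_num
    rw [h4, Finset.sum_mul_sum]
    congr 1
    refine Finset.sum_congr rfl fun p _ => Finset.sum_congr rfl fun q _ => by ring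
  simp_rw [step, ← Finset.mul_sum]
  rw [Finset.sum_comm]
  have inner1 : ∀ p : (Fin n → Fin 2) × (Fin n → Fin 2),
      ∑ x : Fin n → Fin 4, ∑ q : (Fin n → Fin 2) × (Fin n → Fin 2),
          (pauliString x p.2 p.1 * (starRingEnd ℂ) (pauliString x q.2 q.1))
            * ((starRingEnd ℂ) (U p.2 p.1) * W q.2 q.1)
      = (2:ℂ)^n * ((starRingEnd ℂ) (U p.2 p.1) * W p.2 p.1) := by
    intro p
    rw [Finset.sum_comm]
    have key : ∀ q : (Fin n → Fin 2) × (Fin n → Fin 2),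
        ∑ x : Fin n → Fin 4,
          (pauliString x p.2 p.1 * (starRingEnd ℂ) (pauliString x q.2 q.1))
            * ((starRingEnd ℂ) (U p.2 p.1) * W q.2 q.1)
        = (if p.2 = q.2 ∧ p.1 = q.1 then (2:ℂ)^n else 0) * ((starRingEnd ℂ) (U p.2 p.1) * W q.2 q.1) := by
      intro q
      rw [← Finset.sum_mul, pauliString_compl]
    simp_rw [key]
    rw [Finset.sum_eq_single p]
    · simp
    · intro q _ hq
      have hne : ¬ (p.2 = q.2 ∧ p.1 = q.1) := by
        rintro ⟨h2, h1⟩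
        exact hq (Prod.ext h1.symm h2.symm)
      rw [if_neg hne, zero_mul]
    · intro h; exact absurd (mem_univ p) h
  simp_rw [inner1, ← Finset.mul_sum]
  rw [trace_form, sum_pair (g := fun j i => (starRingEnd ℂ) (U i j) * W i j)]
  have h4 : (4:ℂ)^n = 2^n * 2^n := by rw [← mul_pow]; norm_num
  have h2 : (2:ℂ)^n ≠ 0 := pow_ne_zero _ two_ne_zero
  field_simp [h4]
  rw [h4]
  ring

def mg {n : ℕ} (S : Finset (Fin n)) (u w : Fin n → Fin 2) : Fin n → Fin 2 :=
  fun l => if l ∈ S then u l else w l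

noncomputable def Efun {n : ℕ} (S : Finset (Fin n))
    (V : Matrix (Fin n → Fin 2) (Fin n → Fin 2) ℂ) (x : Fin n → Fin 4)
    (p : (Fin n → Fin 2) × (Fin n → Fin 2) × (Fin n → Fin 2)) : ℂ :=
  if ∀ l, l ∉ S → p.2.1 l = p.1 l then
    (starRingEnd ℂ) (pauliString x p.2.1 p.1) * V (mg S p.2.1 p.2.2) (mg S p.1 p.2.2)
  else 0

def einv {n : ℕ} (S : Finset (Fin n))
    (p : (Fin n → Fin 2) × (Fin n → Fin 2) × (Fin n → Fin 2)) :
    (Fin n → Fin 2) × (Fin n → Fin 2) × (Fin n → Fin 2) :=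
  (fun l => if l ∈ S then p.1 l else p.2.2 l + p.2.1 l + p.1 l,
   fun l => if l ∈ S then p.2.1 l else p.2.2 l,
   fun l => if l ∈ S then p.2.2 l else p.2.1 l)

lemma fin2_add_add (a b d : Fin 2) : b + d + (d + b + a) = a := by revert a b d; decide

lemma fin2_eq_iff (a b d : Fin 2) : (d = d + a + b) ↔ a = b := by revert a b d; decide

lemma fin2_add_self (a d : Fin 2) : d + a + a = d := by revert a d; decide

lemma einv_invol {n : ℕ} (S : Finset (Fin n)) : Function.Involutive (einv (n := n) S) := by
  rintro ⟨j, i, c⟩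
  refine Prod.ext ?_ (Prod.ext ?_ ?_) <;> funext l <;>
    by_cases h : l ∈ S <;> simp [einv, h, fin2_add_add]

lemma trace_avgOut {n : ℕ} (S : Finset (Fin n))
    (V : Matrix (Fin n → Fin 2) (Fin n → Fin 2) ℂ) (x : Fin n → Fin 4) :
    Matrix.trace ((pauliString x)ᴴ * avgOut S V)
      = if psupp x ⊆ S then Matrix.trace ((pauliString x)ᴴ * V) else 0 := by
  -- Step A: trace as (1/2^n) * triple sum of Efun
  have hA : Matrix.trace ((pauliString x)ᴴ * avgOut S V)
      = (1 / 2 ^ n : ℂ) * ∑ j : Fin n → Fin 2, ∑ i : Fin n → Fin 2, ∑ c : Fin n → Fin 2,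
          Efun S V x (j, i, c) := by
    rw [trace_form, Finset.mul_sum]
    refine Finset.sum_congr rfl fun j _ => ?_
    rw [Finset.mul_sum]
    refine Finset.sum_congr rfl fun i _ => ?_
    by_cases hc : ∀ l, l ∉ S → i l = j l
    · simp only [avgOut, Matrix.of_apply, if_pos hc, Efun, mg]
      simp only [Finset.mul_sum]
      refine Finset.sum_congr rfl fun c _ => ?_
      rw [show mg S i c = fun l => if l ∈ S then i l else c l from rfl,
          show mg S j c = fun l => if l ∈ S then j l else c l from rfl]
      ring
    · simp [avgOut, Efun, hc]
  -- Step B: involution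
  have hB : ∑ p : (Fin n → Fin 2) × (Fin n → Fin 2) × (Fin n → Fin 2), Efun S V x p
      = ∑ p : (Fin n → Fin 2) × (Fin n → Fin 2) × (Fin n → Fin 2), Efun S V x (einv S p) :=
    (Fintype.sum_bijective (einv S) (einv_invol S).bijective _ _ (fun _ => rfl)).symm
  -- Step C: simplify Efun ∘ einv
  have hC : ∀ j i c : Fin n → Fin 2, Efun S V x (einv S (j, i, c))
      = if ∀ l, l ∉ S → i l = j l then
          (starRingEnd ℂ) (pauliString x (mg S i c) (mg S j c)) * V i j else 0 := by
    intro j i c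
    simp only [Efun, einv]
    have hcond : (∀ l, l ∉ S → (if l ∈ S then i l else c l) =
        (if l ∈ S then j l else c l + i l + j l)) ↔ (∀ l, l ∉ S → i l = j l) := by
      constructor
      · intro h l hl
        have := h l hl
        rw [if_neg hl, if_neg hl] at this
        exact (fin2_eq_iff _ _ _).mp this
      · intro h l hl
        rw [if_neg hl, if_neg hl, h l hl, fin2_add_self]
    by_cases hc : ∀ l, l ∉ S → i l = j l
    · rw [if_pos (hcond.mpr hc), if_pos hc]
      have e1 : (fun l => if l ∈ S then i l else c l) = mg S i c := rfl
      have e2 : (fun l => if l ∈ S then j l else c l + i l + j l) = mg S j c := by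
        funext l
        by_cases h : l ∈ S
        · simp [mg, h]
        · rw [if_neg h, mg, if_neg h, ← hc l h, fin2_add_self]
      have e3 : mg S (fun l => if l ∈ S then i l else c l)
          (fun l => if l ∈ S then c l else i l) = i := by
        funext l; by_cases h : l ∈ S <;> simp [mg, h]
      have e4 : mg S (fun l => if l ∈ S then j l else c l + i l + j l)
          (fun l => if l ∈ S then c l else i l) = j := by
        funext l
        by_cases h : l ∈ S
        · simp [mg, h]
        · simp [mg, h, hc l h]
      rw [e3, e4, e1, e2]
    · rw [if_neg (fun h => hc (hcond.mp h)), if_neg hc]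
  -- Step D: sum over c of the Pauli factor
  have hD : ∀ j i : Fin n → Fin 2,
      ∑ c : Fin n → Fin 2, (starRingEnd ℂ) (pauliString x (mg S i c) (mg S j c))
        = ∏ l, (if l ∈ S then 2 * (starRingEnd ℂ) (pauli (x l) (i l) (j l))
            else (if x l = 0 then 2 else 0)) := by
    intro j i
    have h1 : ∀ c : Fin n → Fin 2, (starRingEnd ℂ) (pauliString x (mg S i c) (mg S j c))
        = ∏ l, (if l ∈ S then (starRingEnd ℂ) (pauli (x l) (i l) (j l))
            else (starRingEnd ℂ) (pauli (x l) (c l) (c l))) := by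
      intro c
      rw [pauliString]
      simp only [Matrix.of_apply, map_prod]
      refine Finset.prod_congr rfl fun l _ => ?_
      by_cases h : l ∈ S <;> simp [mg, h]
    simp_rw [h1]
    rw [← Fintype.prod_sum (f := fun l v => if l ∈ S then (starRingEnd ℂ) (pauli (x l) (i l) (j l))
        else (starRingEnd ℂ) (pauli (x l) v v))]
    refine Finset.prod_congr rfl fun l _ => ?_
    by_cases h : l ∈ S
    · simp only [if_pos h, Finset.sum_const, Finset.card_univ]
      simp [two_smul, two_mul]
    · simp only [if_neg h]
      rw [← map_sum, pauli_trace]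
      by_cases hx : x l = 0 <;> simp [hx, Complex.conj_ofNat]
  rw [hA]
  have hswap : ∑ j : Fin n → Fin 2, ∑ i : Fin n → Fin 2, ∑ c : Fin n → Fin 2,
      Efun S V x (j, i, c)
      = ∑ j : Fin n → Fin 2, ∑ i : Fin n → Fin 2,
          (if ∀ l, l ∉ S → i l = j l then
            (∑ c : Fin n → Fin 2,
              (starRingEnd ℂ) (pauliString x (mg S i c) (mg S j c))) * V i j else 0) := by
    calc ∑ j, ∑ i, ∑ c, Efun S V x (j, i, c)
        = ∑ p : (Fin n → Fin 2) × (Fin n → Fin 2) × (Fin n → Fin 2), Efun S V x p := by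
          rw [Fintype.sum_prod_type]
          refine Finset.sum_congr rfl fun j _ => ?_
          rw [Fintype.sum_prod_type]
      _ = ∑ p : (Fin n → Fin 2) × (Fin n → Fin 2) × (Fin n → Fin 2), Efun S V x (einv S p) := hB
      _ = ∑ j, ∑ i, ∑ c, Efun S V x (einv S (j, i, c)) := by
          rw [Fintype.sum_prod_type]
          refine Finset.sum_congr rfl fun j _ => ?_
          rw [Fintype.sum_prod_type]
      _ = ∑ j, ∑ i, ∑ c, (if ∀ l, l ∉ S → i l = j l then
            (starRingEnd ℂ) (pauliString x (mg S i c) (mg S j c)) * V i j else 0) := by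
          simp_rw [hC]
      _ = ∑ j, ∑ i, (if ∀ l, l ∉ S → i l = j l then
            (∑ c, (starRingEnd ℂ) (pauliString x (mg S i c) (mg S j c))) * V i j else 0) := by
          refine Finset.sum_congr rfl fun j _ => Finset.sum_congr rfl fun i _ => ?_
          by_cases hc : ∀ l, l ∉ S → i l = j l
          · simp_rw [if_pos hc]
            exact (Finset.sum_mul _ _ _).symm
          · simp_rw [if_neg hc]
            simp
  rw [hswap]
  by_cases hsupp : psupp x ⊆ S
  · rw [if_pos hsupp]
    have hx0 : ∀ l, l ∉ S → x l = 0 := by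
      intro l hl
      by_contra h
      exact hl (hsupp (by simp [psupp, h]))
    have hval : ∀ j i : Fin n → Fin 2,
        (if ∀ l, l ∉ S → i l = j l then
          (∑ c : Fin n → Fin 2,
            (starRingEnd ℂ) (pauliString x (mg S i c) (mg S j c))) * V i j else 0)
        = (2:ℂ)^n * ((starRingEnd ℂ) (pauliString x i j) * V i j) := by
      intro j i
      by_cases hc : ∀ l, l ∉ S → i l = j l
      · rw [if_pos hc, hD]
        have : ∏ l, (if l ∈ S then 2 * (starRingEnd ℂ) (pauli (x l) (i l) (j l))
            else (if x l = 0 then 2 else 0))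
            = ∏ l, (2 * (starRingEnd ℂ) (pauli (x l) (i l) (j l))) := by
          refine Finset.prod_congr rfl fun l _ => ?_
          by_cases h : l ∈ S
          · rw [if_pos h]
          · rw [if_neg h, if_pos (hx0 l h), hx0 l h, pauli0, hc l h, Matrix.one_apply_eq]
            simp
        rw [this, Finset.prod_mul_distrib, Finset.prod_const, Finset.card_univ,
          Fintype.card_fin, pauliString]
        simp only [Matrix.of_apply, map_prod]
        ring
      · rw [if_neg hc]
        push_neg at hc
        obtain ⟨l, hlS, hlne⟩ := hc
        have : pauliString x i j = 0 := by
          rw [pauliString]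
          simp only [Matrix.of_apply]
          refine Finset.prod_eq_zero (mem_univ l) ?_
          rw [hx0 l hlS, pauli0, Matrix.one_apply_ne hlne]
        rw [this]
        simp
    simp_rw [hval]
    rw [trace_form]
    have hpull : ∀ j : Fin n → Fin 2,
        ∑ i : Fin n → Fin 2, (2:ℂ)^n * ((starRingEnd ℂ) (pauliString x i j) * V i j)
          = (2:ℂ)^n * ∑ i : Fin n → Fin 2, (starRingEnd ℂ) (pauliString x i j) * V i j :=
      fun j => (Finset.mul_sum _ _ _).symm
    simp_rw [hpull]
    rw [← Finset.mul_sum, ← mul_assoc]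
    have h2 : (1 / 2 ^ n : ℂ) * (2:ℂ)^n = 1 := by
      field_simp
    rw [h2, one_mul]
  · rw [if_neg hsupp]
    rw [Finset.not_subset] at hsupp
    obtain ⟨l0, hl0mem, hl0S⟩ := hsupp
    have hxl0 : x l0 ≠ 0 := by simpa [psupp] using hl0mem
    have hzero : ∀ j i : Fin n → Fin 2,
        (∑ c : Fin n → Fin 2, (starRingEnd ℂ) (pauliString x (mg S i c) (mg S j c))) = 0 := by
      intro j i
      rw [hD]
      refine Finset.prod_eq_zero (mem_univ l0) ?_
      rw [if_neg hl0S, if_neg hxl0]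
    simp [hzero]

lemma coeff_avgOut {n : ℕ} (S : Finset (Fin n))
    (V : Matrix (Fin n → Fin 2) (Fin n → Fin 2) ℂ) (x : Fin n → Fin 4) :
    pauliCoeff (avgOut S V) x = if psupp x ⊆ S then pauliCoeff V x else 0 := by
  rw [pauliCoeff, trace_avgOut]
  by_cases h : psupp x ⊆ S <;> simp [h, pauliCoeff]

lemma parseval {n : ℕ} (V : Matrix (Fin n → Fin 2) (Fin n → Fin 2) ℂ)
    (hV : V ∈ Matrix.unitaryGroup (Fin n → Fin 2) ℂ) :
    ∑ x : Fin n → Fin 4, ‖pauliCoeff V x‖ ^ 2 = 1 := by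
  have h1 := inner_formula V V
  have h2 : Vᴴ * V = 1 := by
    have := Matrix.mem_unitaryGroup_iff'.mp hV
    rwa [Matrix.star_eq_conjTranspose] at this
  rw [h2, Matrix.trace_one] at h1
  have hcard : (Fintype.card (Fin n → Fin 2) : ℂ) = 2 ^ n := by
    simp [Fintype.card_fun]
  rw [hcard] at h1
  have h3 : ∀ z : ℂ, (starRingEnd ℂ) z * z = ((‖z‖ ^ 2 : ℝ) : ℂ) := by
    intro z
    rw [mul_comm, Complex.mul_conj, Complex.normSq_eq_norm_sq]
  simp_rw [h3] at h1
  rw [← Complex.ofReal_sum] at h1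
  have h2n : (2 : ℂ) ^ n ≠ 0 := pow_ne_zero _ two_ne_zero
  have h4 : ((∑ x : Fin n → Fin 4, ‖pauliCoeff V x‖ ^ 2 : ℝ) : ℂ) = 1 := by
    refine mul_left_cancel₀ h2n ?_
    rw [mul_one]
    exact h1.symm
  exact_mod_cast h4

theorem stmt16 {n : ℕ} (k : ℕ) (τ : ℝ) (hτ : 0 < τ)
    (T S : Finset (Fin n)) (hT : T.card = k)
    (U V : Matrix (Fin n → Fin 2) (Fin n → Fin 2) ℂ)
    (hU : U ∈ Matrix.unitaryGroup (Fin n → Fin 2) ℂ)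
    (hV : V ∈ Matrix.unitaryGroup (Fin n → Fin 2) ℂ)
    (hVjunta : IsJuntaOn V T)
    (hS : ∀ i ∈ T, τ ^ 2 / k ≤ infLe U k i → i ∈ S) :
    (1 / (2 ^ n : ℝ)) *
        |‖Matrix.trace (Uᴴ * V)‖
          - ‖Matrix.trace (Uᴴ * avgOut S V)‖| ≤ τ := by
  classical
  have hVjunta : ∀ x : Fin n → Fin 4, ¬ psupp x ⊆ T → pauliCoeff V x = 0 := hVjunta
  have hS : ∀ i ∈ T, τ ^ 2 / k ≤ (∑ x ∈ Finset.univ.filter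
      (fun x : Fin n → Fin 4 => (psupp x).card ≤ k ∧ x i ≠ 0),
      ‖pauliCoeff U x‖ ^ 2) → i ∈ S := hS

  classical
  set B : Finset (Fin n → Fin 4) :=
    Finset.univ.filter (fun x : Fin n → Fin 4 => psupp x ⊆ T ∧ ¬ psupp x ⊆ S) with hBdef
  -- the difference of traces
  have hdiff : Matrix.trace (Uᴴ * V) - Matrix.trace (Uᴴ * avgOut S V)
      = (2:ℂ)^n * ∑ x ∈ B, (starRingEnd ℂ) (pauliCoeff U x) * pauliCoeff V x := by
    rw [inner_formula, inner_formula, ← mul_sub, ← Finset.sum_sub_distrib]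
    congr 1
    rw [hBdef, Finset.sum_filter]
    refine Finset.sum_congr rfl fun x _ => ?_
    rw [coeff_avgOut]
    by_cases h1 : psupp x ⊆ S
    · simp [h1]
    · rw [if_neg h1, mul_zero, sub_zero]
      by_cases h2 : psupp x ⊆ T
      · rw [if_pos ⟨h2, h1⟩]
      · rw [if_neg (fun hh => h2 hh.1), hVjunta x h2, mul_zero]
  -- bound the sum by Cauchy-Schwarz
  have hfg_nonneg : (0:ℝ) ≤ ∑ x ∈ B, ‖pauliCoeff U x‖ * ‖pauliCoeff V x‖ :=
    Finset.sum_nonneg fun x _ => mul_nonneg (norm_nonneg _) (norm_nonneg _)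
  have hG : ∑ x ∈ B, ‖pauliCoeff V x‖ ^ 2 ≤ 1 := by
    rw [← parseval V hV]
    exact Finset.sum_le_sum_of_subset_of_nonneg (Finset.filter_subset _ _)
      (fun x _ _ => sq_nonneg _)
  have hA : ∑ x ∈ B, ‖pauliCoeff U x‖ ^ 2 ≤ τ ^ 2 := by
    have step1 : ∑ x ∈ B, ‖pauliCoeff U x‖ ^ 2
        ≤ ∑ i ∈ T \ S, ∑ x ∈ Finset.univ.filter
            (fun x : Fin n → Fin 4 => (psupp x).card ≤ k ∧ x i ≠ 0),
            ‖pauliCoeff U x‖ ^ 2 := by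
      have hpt : ∀ x ∈ B, ‖pauliCoeff U x‖ ^ 2
          ≤ ∑ i ∈ T \ S, (if x i ≠ 0 then ‖pauliCoeff U x‖ ^ 2 else 0) := by
        intro x hx
        rw [hBdef, Finset.mem_filter] at hx
        obtain ⟨-, hxT, hxS⟩ := hx
        obtain ⟨i0, hi0p, hi0S⟩ := Finset.not_subset.mp hxS
        have hi0T : i0 ∈ T := hxT hi0p
        have hi0x : x i0 ≠ 0 := by simpa [psupp] using hi0p
        have hmem : i0 ∈ T \ S := Finset.mem_sdiff.mpr ⟨hi0T, hi0S⟩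
        calc ‖pauliCoeff U x‖ ^ 2
            = (if x i0 ≠ 0 then ‖pauliCoeff U x‖ ^ 2 else 0) := (if_pos hi0x).symm
          _ ≤ _ := Finset.single_le_sum
              (f := fun i => if x i ≠ 0 then ‖pauliCoeff U x‖ ^ 2 else 0)
              (fun i _ => by positivity) hmem
      calc ∑ x ∈ B, ‖pauliCoeff U x‖ ^ 2
          ≤ ∑ x ∈ B, ∑ i ∈ T \ S, (if x i ≠ 0 then ‖pauliCoeff U x‖ ^ 2 else 0) :=
            Finset.sum_le_sum hpt
        _ = ∑ i ∈ T \ S, ∑ x ∈ B, (if x i ≠ 0 then ‖pauliCoeff U x‖ ^ 2 else 0) :=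
            Finset.sum_comm
        _ ≤ _ := by
            refine Finset.sum_le_sum fun i _ => ?_
            rw [← Finset.sum_filter]
            refine Finset.sum_le_sum_of_subset_of_nonneg ?_ (fun x _ _ => sq_nonneg _)
            intro x hx
            rw [Finset.mem_filter] at hx ⊢
            obtain ⟨hxB, hxi⟩ := hx
            rw [hBdef, Finset.mem_filter] at hxB
            refine ⟨Finset.mem_univ _, ?_, hxi⟩
            calc (psupp x).card ≤ T.card := Finset.card_le_card hxB.2.1
              _ = k := hT
    have step2 : ∑ i ∈ T \ S, ∑ x ∈ Finset.univ.filter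
        (fun x : Fin n → Fin 4 => (psupp x).card ≤ k ∧ x i ≠ 0),
        ‖pauliCoeff U x‖ ^ 2 ≤ τ ^ 2 := by
      have hle : ∀ i ∈ T \ S, ∑ x ∈ Finset.univ.filter
          (fun x : Fin n → Fin 4 => (psupp x).card ≤ k ∧ x i ≠ 0),
          ‖pauliCoeff U x‖ ^ 2 ≤ τ ^ 2 / k := by
        intro i hi
        rw [Finset.mem_sdiff] at hi
        by_contra h
        push_neg at h
        exact hi.2 (hS i hi.1 h.le)
      calc _ ≤ ∑ _i ∈ T \ S, τ ^ 2 / k := Finset.sum_le_sum hle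
        _ = (T \ S).card * (τ ^ 2 / k) := by rw [Finset.sum_const, nsmul_eq_mul]
        _ ≤ (k : ℝ) * (τ ^ 2 / k) := by
            have hcard : ((T \ S).card : ℝ) ≤ (k : ℝ) := by
              exact_mod_cast hT ▸ Finset.card_le_card (Finset.sdiff_subset)
            exact mul_le_mul_of_nonneg_right hcard (by positivity)
        _ ≤ τ ^ 2 := by
            by_cases hk : (k : ℝ) = 0
            · rw [hk, zero_mul]; positivity
            · rw [mul_comm, div_mul_cancel₀ _ hk]
    exact step1.trans step2
  have hCS : ‖∑ x ∈ B, (starRingEnd ℂ) (pauliCoeff U x) * pauliCoeff V x‖ ≤ τ := by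
    have h1 : ‖∑ x ∈ B, (starRingEnd ℂ) (pauliCoeff U x) * pauliCoeff V x‖
        ≤ ∑ x ∈ B, ‖pauliCoeff U x‖ * ‖pauliCoeff V x‖ := by
      refine (norm_sum_le _ _).trans ?_
      refine le_of_eq (Finset.sum_congr rfl fun x _ => ?_)
      rw [norm_mul, Complex.norm_conj]
    have h2 := Finset.sum_mul_sq_le_sq_mul_sq B
      (fun x => ‖pauliCoeff U x‖) (fun x => ‖pauliCoeff V x‖)
    have h3 : (∑ x ∈ B, ‖pauliCoeff U x‖ * ‖pauliCoeff V x‖) ^ 2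
        ≤ τ ^ 2 := by
      calc _ ≤ (∑ x ∈ B, ‖pauliCoeff U x‖ ^ 2)
              * ∑ x ∈ B, ‖pauliCoeff V x‖ ^ 2 := h2
        _ ≤ τ ^ 2 * 1 := by
            refine mul_le_mul hA hG (Finset.sum_nonneg fun x _ => sq_nonneg _) (by positivity)
        _ = τ ^ 2 := mul_one _
    nlinarith [hfg_nonneg, h1]
  -- assemble
  have htri : |‖Matrix.trace (Uᴴ * V)‖
      - ‖Matrix.trace (Uᴴ * avgOut S V)‖|
      ≤ ‖Matrix.trace (Uᴴ * V) - Matrix.trace (Uᴴ * avgOut S V)‖ := by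
    exact
      abs_norm_sub_norm_le (Matrix.trace (Uᴴ * V)) (Matrix.trace (Uᴴ * avgOut S V))
  have habs : ‖Matrix.trace (Uᴴ * V) - Matrix.trace (Uᴴ * avgOut S V)‖
      = 2 ^ n * ‖∑ x ∈ B, (starRingEnd ℂ) (pauliCoeff U x) * pauliCoeff V x‖ := by
    rw [hdiff, norm_mul, norm_pow, Complex.norm_two]
  have h2n : (0:ℝ) < 2 ^ n := by positivity
  calc (1 / (2 ^ n : ℝ)) * |‖Matrix.trace (Uᴴ * V)‖
        - ‖Matrix.trace (Uᴴ * avgOut S V)‖|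
      ≤ (1 / (2 ^ n : ℝ)) * (2 ^ n *
          ‖∑ x ∈ B, (starRingEnd ℂ) (pauliCoeff U x) * pauliCoeff V x‖) := by
        rw [← habs]
        exact mul_le_mul_of_nonneg_left htri (by positivity)
    _ = ‖∑ x ∈ B, (starRingEnd ℂ) (pauliCoeff U x) * pauliCoeff V x‖ := by
        field_simp
    _ ≤ τ := hCS
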